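/- For every real s with 0 ≤ s < 1/2: (i) for every ε > 0, ε^{s + 1/2} · Σ_{m=1}^∞ m^{s − 1/2} (1+ε)^{−m} ≤ Γ(s + 1/2); and (ii) the limit as ε → 0⁺ of ε^{s + 1/2} · Σ_{m=1}^∞ m^{s − 1/2} (1+ε)^{−m} equals Γ(s + 1/2), where Γ denotes the real Gamma function. -/

import Mathlib

open Filter

section PolylogAux

open MeasureTheory Real Set

private lemma aux_integrableOn {q : ℝ} (hq : -1 < q) {c : ℝ} (hc : 0 < c) :
    IntegrableOn (fun t : ℝ => t ^ q * Real.exp (-(c * t))) (Set.Ioi 0) := by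
  have h := integrableOn_rpow_mul_exp_neg_mul_rpow hq one_pos hc
  refine h.congr_fun (fun t ht => ?_) measurableSet_Ioi
  simp only [Real.rpow_one, neg_mul]

private lemma aux_exp_int {c : ℝ} (hc : 0 < c) :
    ∫ t in Set.Ioi (0:ℝ), Real.exp (-(c * t)) = c⁻¹ := by
  have h := integral_rpow_mul_exp_neg_mul_Ioi one_pos hc
  simpa [Real.Gamma_one, Real.rpow_one, one_div] using h

private lemma aux_rpow_int {q c : ℝ} (hq : 0 < q) (hc : 0 < c) :
    ∫ t in Set.Ioi (0:ℝ), t ^ (q - 1) * Real.exp (-(c * t)) = c ^ (-q) * Real.Gamma q := by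
  rw [integral_rpow_mul_exp_neg_mul_Ioi hq hc, one_div, ← Real.rpow_neg_one,
    ← Real.rpow_mul hc.le]
  norm_num

private lemma beta_lintegral {a : ℝ} (ha0 : 0 < a) (ha1 : a < 1) :
    ∫⁻ u in Set.Ioi (0:ℝ), ENNReal.ofReal (u ^ (-a) / (1 + u)) =
      ENNReal.ofReal (Real.Gamma (1 - a) * Real.Gamma a) := by
  have hb : 0 < 1 - a := by linarith
  have key : ∀ u ∈ Set.Ioi (0:ℝ),
      ENNReal.ofReal (u ^ (-a) / (1 + u)) =
        ∫⁻ t in Set.Ioi (0:ℝ), ENNReal.ofReal (u ^ (-a) * Real.exp (-((1 + u) * t))) := by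
    intro u hu
    have hu' : (0:ℝ) < u := hu
    have h1u : (0:ℝ) < 1 + u := by linarith
    have hint : Integrable (fun t : ℝ => u ^ (-a) * Real.exp (-((1 + u) * t)))
        (volume.restrict (Set.Ioi 0)) := by
      have h2 : IntegrableOn (fun t : ℝ => u ^ (-a) * (t ^ (0:ℝ) * Real.exp (-((1+u) * t))))
          (Set.Ioi 0) := (aux_integrableOn (q := 0) (by norm_num) h1u).const_mul (u ^ (-a))
      refine (h2.congr_fun ?_ measurableSet_Ioi : _)
      intro t ht; simp [Real.rpow_zero]
    rw [← ofReal_integral_eq_lintegral_ofReal hint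
        (Filter.Eventually.of_forall fun t => by positivity)]
    congr 1
    rw [MeasureTheory.integral_const_mul, aux_exp_int h1u, div_eq_mul_inv]
  rw [setLIntegral_congr_fun measurableSet_Ioi key]
  have hmeas : Measurable (Function.uncurry fun u t : ℝ =>
      ENNReal.ofReal (u ^ (-a) * Real.exp (-((1 + u) * t)))) := by
    apply ENNReal.measurable_ofReal.comp
    fun_prop
  rw [lintegral_lintegral_swap hmeas.aemeasurable]
  have key2 : ∀ t ∈ Set.Ioi (0:ℝ),
      (∫⁻ u in Set.Ioi (0:ℝ), ENNReal.ofReal (u ^ (-a) * Real.exp (-((1 + u) * t)))) =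
        ENNReal.ofReal (Real.Gamma (1 - a) * (t ^ (a - 1) * Real.exp (-(1 * t)))) := by
    intro t ht
    have ht' : (0:ℝ) < t := ht
    have e1 : ∀ u ∈ Set.Ioi (0:ℝ), ENNReal.ofReal (u ^ (-a) * Real.exp (-((1 + u) * t)))
        = ENNReal.ofReal (Real.exp (-(1 * t)) * (u ^ ((1 - a) - 1) * Real.exp (-(t * u)))) := by
      intro u hu
      congr 1
      rw [show (1 - a) - 1 = -a by ring, show -((1+u)*t) = -(1*t) + -(t*u) by ring,
        Real.exp_add]
      ring
    rw [setLIntegral_congr_fun measurableSet_Ioi e1]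
    have hint : Integrable (fun u : ℝ =>
        Real.exp (-(1 * t)) * (u ^ ((1 - a) - 1) * Real.exp (-(t * u))))
        (volume.restrict (Set.Ioi 0)) :=
      (aux_integrableOn (q := (1 - a) - 1) (by linarith) ht').const_mul _
    have hnn : ∀ᵐ u ∂(volume.restrict (Set.Ioi (0:ℝ))),
        0 ≤ Real.exp (-(1 * t)) * (u ^ ((1 - a) - 1) * Real.exp (-(t * u))) := by
      filter_upwards [ae_restrict_mem measurableSet_Ioi] with u hu
      have : (0:ℝ) < u := hu
      positivity
    rw [← ofReal_integral_eq_lintegral_ofReal hint hnn]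
    congr 1
    rw [MeasureTheory.integral_const_mul, aux_rpow_int hb ht']
    rw [show -(1 - a) = a - 1 by ring]
    ring
  rw [setLIntegral_congr_fun measurableSet_Ioi key2]
  have hint : Integrable (fun t : ℝ => Real.Gamma (1 - a) * (t ^ (a - 1) * Real.exp (-(1 * t))))
      (volume.restrict (Set.Ioi 0)) :=
    (aux_integrableOn (q := a - 1) (by linarith) one_pos).const_mul _
  have hnn : ∀ᵐ t ∂(volume.restrict (Set.Ioi (0:ℝ))),
      0 ≤ Real.Gamma (1 - a) * (t ^ (a - 1) * Real.exp (-(1 * t))) := by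
    filter_upwards [ae_restrict_mem measurableSet_Ioi] with t ht
    have h1 : (0:ℝ) < t := ht
    have h2 : 0 ≤ Real.Gamma (1 - a) := Real.Gamma_nonneg_of_nonneg hb.le
    positivity
  rw [← ofReal_integral_eq_lintegral_ofReal hint hnn]
  congr 1
  rw [MeasureTheory.integral_const_mul, aux_rpow_int ha0 one_pos, Real.one_rpow]
  ring

private lemma beta_meas {a : ℝ} : AEStronglyMeasurable (fun u : ℝ => u ^ (-a) / (1 + u))
    (volume.restrict (Set.Ioi 0)) := by
  refine ContinuousOn.aestronglyMeasurable ?_ measurableSet_Ioi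
  refine ContinuousOn.div ?_ (by fun_prop) ?_
  · exact ContinuousOn.rpow_const continuousOn_id (fun x hx => Or.inl (ne_of_gt hx))
  · intro x hx
    have : (0:ℝ) < x := hx
    positivity

private lemma beta_integrable {a : ℝ} (ha0 : 0 < a) (ha1 : a < 1) :
    IntegrableOn (fun u : ℝ => u ^ (-a) / (1 + u)) (Set.Ioi 0) := by
  refine ⟨beta_meas, ?_⟩
  rw [HasFiniteIntegral]
  have : ∫⁻ u in Set.Ioi (0:ℝ), ‖u ^ (-a) / (1 + u)‖ₑ =
      ∫⁻ u in Set.Ioi (0:ℝ), ENNReal.ofReal (u ^ (-a) / (1 + u)) := by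
    refine lintegral_congr_ae ?_
    filter_upwards [ae_restrict_mem measurableSet_Ioi] with u hu
    have : (0:ℝ) < u := hu
    rw [Real.enorm_eq_ofReal (by positivity)]
  rw [this, beta_lintegral ha0 ha1]
  exact ENNReal.ofReal_lt_top

private lemma beta_value {a : ℝ} (ha0 : 0 < a) (ha1 : a < 1) :
    ∫ u in Set.Ioi (0:ℝ), u ^ (-a) / (1 + u) = Real.Gamma (1 - a) * Real.Gamma a := by
  rw [integral_eq_lintegral_of_nonneg_ae ?_ beta_meas]
  · rw [beta_lintegral ha0 ha1, ENNReal.toReal_ofReal]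
    have h1 : 0 ≤ Real.Gamma (1 - a) := Real.Gamma_nonneg_of_nonneg (by linarith)
    have h2 : 0 ≤ Real.Gamma a := Real.Gamma_nonneg_of_nonneg ha0.le
    positivity
  · filter_upwards [ae_restrict_mem measurableSet_Ioi] with u hu
    have : (0:ℝ) < u := hu
    positivity

private lemma master {a : ℝ} (ha0 : 0 < a) (ha1 : a < 1) {ε : ℝ} (hε : 0 < ε) :
    Real.Gamma (1 - a) *
      (ε ^ a * ∑' m : ℕ, ((m : ℝ) + 1) ^ (a - 1) * (1 + ε) ^ (-((m : ℝ) + 1)))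
      = ∫ u in Set.Ioi (0:ℝ), u ^ (-a) * (ε / ((1 + ε) * Real.exp (ε * u) - 1)) := by
  have h1ε : (0:ℝ) < 1 + ε := by linarith
  set f : ℕ → ℝ → ℝ := fun m t =>
    (ε ^ a * (1 + ε) ^ (-((m : ℝ) + 1))) * (t ^ (-a) * Real.exp (-(((m : ℝ) + 1) * t)))
    with hf
  have hc : ∀ m : ℕ, (0:ℝ) < (m:ℝ) + 1 := fun m => by positivity
  have hfint : ∀ m : ℕ, IntegrableOn (f m) (Set.Ioi 0) := fun m =>
    (aux_integrableOn (by linarith) (hc m)).const_mul _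
  have hval : ∀ m : ℕ, ∫ t in Set.Ioi (0:ℝ), f m t
      = Real.Gamma (1 - a) * ((ε ^ a * (1 + ε) ^ (-((m:ℝ)+1))) * ((m:ℝ)+1) ^ (a-1)) := by
    intro m
    rw [hf]
    rw [MeasureTheory.integral_const_mul, show (-a) = (1 - a) - 1 by ring,
      aux_rpow_int (by linarith) (hc m), show -(1-a) = a - 1 by ring]
    ring
  have hx : ∀ m : ℕ, (1 + ε) ^ (-((m:ℝ)+1)) = ((1 + ε)⁻¹) ^ (m+1 : ℕ) := by
    intro m
    rw [show ((m:ℝ)+1) = ((m+1 : ℕ) : ℝ) by push_cast; ring,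
      Real.rpow_neg h1ε.le, Real.rpow_natCast, inv_pow]
  have hnn : ∀ m : ℕ, 0 ≤ᵐ[volume.restrict (Set.Ioi (0:ℝ))] f m := by
    intro m
    filter_upwards [ae_restrict_mem measurableSet_Ioi] with t ht
    have ht' : (0:ℝ) < t := ht
    have h1 : (0:ℝ) ≤ (1+ε) ^ (-((m:ℝ)+1)) := Real.rpow_nonneg h1ε.le _
    have h2 : (0:ℝ) ≤ t ^ (-a) := Real.rpow_nonneg ht'.le _
    positivity
  calc Real.Gamma (1 - a) *
      (ε ^ a * ∑' m : ℕ, ((m : ℝ) + 1) ^ (a - 1) * (1 + ε) ^ (-((m : ℝ) + 1)))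
      = ∑' m : ℕ, ∫ t in Set.Ioi (0:ℝ), f m t := by
        rw [← tsum_mul_left, ← tsum_mul_left]
        refine tsum_congr fun m => ?_
        rw [hval m]; ring
    _ = ∫ t in Set.Ioi (0:ℝ), ∑' m : ℕ, f m t := by
        refine (MeasureTheory.integral_tsum (fun m => (hfint m).1) ?_).symm
        have e : ∀ m : ℕ, ∫⁻ t in Set.Ioi (0:ℝ), ‖f m t‖ₑ
            = ENNReal.ofReal (∫ t in Set.Ioi (0:ℝ), f m t) := by
          intro m
          rw [ofReal_integral_eq_lintegral_ofReal (hfint m) (hnn m)]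
          exact lintegral_congr_ae ((hnn m).mono fun t ht => (Real.enorm_eq_ofReal ht))
        simp_rw [e, hval]
        have hΓ : 0 ≤ Real.Gamma (1 - a) := Real.Gamma_nonneg_of_nonneg (by linarith)
        have hεa : 0 ≤ ε ^ a := Real.rpow_nonneg hε.le a
        have hbd : ∀ m : ℕ,
            ENNReal.ofReal (Real.Gamma (1-a) * ((ε^a * (1+ε)^(-((m:ℝ)+1))) * ((m:ℝ)+1)^(a-1)))
            ≤ ENNReal.ofReal (Real.Gamma (1-a) * ε^a) * (ENNReal.ofReal ((1+ε)⁻¹)) ^ (m+1) := by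
          intro m
          rw [← ENNReal.ofReal_pow (by positivity), ← ENNReal.ofReal_mul (by positivity)]
          refine ENNReal.ofReal_le_ofReal ?_
          have h1 : ((m:ℝ)+1) ^ (a-1) ≤ 1 :=
            Real.rpow_le_one_of_one_le_of_nonpos (by linarith [hc m])
              (by linarith)
          have h2 : (0:ℝ) ≤ (1+ε) ^ (-((m:ℝ)+1)) := Real.rpow_nonneg h1ε.le _
          calc Real.Gamma (1-a) * ((ε^a * (1+ε)^(-((m:ℝ)+1))) * ((m:ℝ)+1)^(a-1))
              ≤ Real.Gamma (1-a) * ((ε^a * (1+ε)^(-((m:ℝ)+1))) * 1) := by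
                refine mul_le_mul_of_nonneg_left ?_ hΓ
                exact mul_le_mul_of_nonneg_left h1 (by positivity)
            _ = Real.Gamma (1-a) * ε^a * ((1+ε)⁻¹)^(m+1) := by rw [hx m]; ring
        refine ne_top_of_le_ne_top ?_ (ENNReal.tsum_le_tsum hbd)
        rw [ENNReal.tsum_mul_left]
        refine ENNReal.mul_ne_top ENNReal.ofReal_ne_top ?_
        have hr : ENNReal.ofReal ((1+ε)⁻¹) < 1 := by
          rw [ENNReal.ofReal_lt_one]
          rw [inv_lt_one_iff₀]; right; linarith
        have : ∑' m : ℕ, (ENNReal.ofReal ((1+ε)⁻¹)) ^ (m+1)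
            ≤ ∑' m : ℕ, (ENNReal.ofReal ((1+ε)⁻¹)) ^ m :=
          ENNReal.tsum_le_tsum fun m => by
            rw [pow_succ]
            calc (ENNReal.ofReal ((1+ε)⁻¹)) ^ m * ENNReal.ofReal ((1+ε)⁻¹)
                ≤ (ENNReal.ofReal ((1+ε)⁻¹)) ^ m * 1 := by gcongr
              _ = (ENNReal.ofReal ((1+ε)⁻¹)) ^ m := mul_one _
        refine ne_top_of_le_ne_top ?_ this
        rw [ENNReal.tsum_geometric]
        refine ENNReal.inv_ne_top.mpr ?_
        simp only [ne_eq, tsub_eq_zero_iff_le, not_le]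
        exact hr
    _ = ∫ t in Set.Ioi (0:ℝ), ε ^ a * (t ^ (-a) * (1 / ((1+ε) * Real.exp t - 1))) := by
        refine setIntegral_congr_fun measurableSet_Ioi fun t ht => ?_
        have ht' : (0:ℝ) < t := ht
        have hterm : ∀ m : ℕ, f m t =
            (ε^a * t^(-a)) * ((1+ε)⁻¹ * Real.exp (-t)) ^ (m+1) := by
          intro m
          rw [hf]
          simp only []
          rw [hx m, show -(((m:ℝ)+1) * t) = ((m+1:ℕ):ℝ) * (-t) by push_cast; ring,
            Real.exp_nat_mul, mul_pow]
          ring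
        rw [tsum_congr hterm, tsum_mul_left]
        have hy0 : (0:ℝ) ≤ (1+ε)⁻¹ * Real.exp (-t) := by positivity
        have hy1 : (1+ε)⁻¹ * Real.exp (-t) < 1 := by
          have h1 : Real.exp (-t) < 1 := Real.exp_lt_one_iff.mpr (by linarith)
          have h2 : (1+ε)⁻¹ ≤ 1 := by
            rw [inv_le_one_iff₀]; right; linarith
          nlinarith [Real.exp_pos (-t)]
        have hgeom : ∑' m : ℕ, ((1+ε)⁻¹ * Real.exp (-t)) ^ (m+1)
            = ((1+ε)⁻¹ * Real.exp (-t)) * (1 - (1+ε)⁻¹ * Real.exp (-t))⁻¹ := by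
          simp_rw [pow_succ']
          rw [tsum_mul_left, tsum_geometric_of_lt_one hy0 hy1]
        rw [hgeom]
        have hD : (0:ℝ) < (1+ε) * Real.exp t - 1 := by
          nlinarith [Real.add_one_le_exp t, Real.exp_pos t]
        have h1y : (0:ℝ) < 1 - (1+ε)⁻¹ * Real.exp (-t) := by linarith
        have key : ((1+ε)⁻¹ * Real.exp (-t)) * (1 - (1+ε)⁻¹ * Real.exp (-t))⁻¹
            = 1 / ((1+ε) * Real.exp t - 1) := by
          rw [Real.exp_neg]
          rw [eq_div_iff hD.ne']
          field_simp
        rw [key]; ring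
    _ = ∫ u in Set.Ioi (0:ℝ), u ^ (-a) * (ε / ((1 + ε) * Real.exp (ε * u) - 1)) := by
        have hsub := integral_comp_mul_left_Ioi
          (fun t => ε ^ a * (t ^ (-a) * (1 / ((1+ε) * Real.exp t - 1)))) 0 hε
        rw [mul_zero, smul_eq_mul] at hsub
        have h2 : (∫ t in Set.Ioi (0:ℝ), ε ^ a * (t ^ (-a) * (1 / ((1+ε) * Real.exp t - 1))))
            = ε * ∫ x in Set.Ioi (0:ℝ),
                ε ^ a * ((ε * x) ^ (-a) * (1 / ((1+ε) * Real.exp (ε * x) - 1))) := by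
          rw [hsub, ← mul_assoc, mul_inv_cancel₀ hε.ne', one_mul]
        rw [h2, ← MeasureTheory.integral_const_mul]
        refine setIntegral_congr_fun measurableSet_Ioi fun u hu => ?_
        have hu' : (0:ℝ) < u := hu
        have hinv : ε ^ a * ε ^ (-a) = 1 := by
          rw [← Real.rpow_add hε]; simp
        rw [Real.mul_rpow hε.le hu'.le]
        have h3 : ε * (ε ^ a * ((ε ^ (-a) * u ^ (-a)) * (1 / ((1+ε) * Real.exp (ε*u) - 1))))
            = (ε ^ a * ε ^ (-a)) * (u ^ (-a) * (ε / ((1+ε) * Real.exp (ε*u) - 1))) := by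
          ring
        rw [h3, hinv, one_mul]

private lemma denom_pos {ε u : ℝ} (hε : 0 < ε) (hu : 0 ≤ u) :
    0 < (1 + ε) * Real.exp (ε * u) - 1 := by
  nlinarith [Real.add_one_le_exp (ε * u), mul_nonneg hε.le hu]

private lemma g_le {ε u : ℝ} (hε : 0 < ε) (hu : 0 ≤ u) :
    ε / ((1 + ε) * Real.exp (ε * u) - 1) ≤ 1 / (1 + u) := by
  rw [div_le_div_iff₀ (denom_pos hε hu) (by linarith)]
  nlinarith [Real.add_one_le_exp (ε * u), mul_nonneg hε.le hu]

private lemma g_tendsto {u : ℝ} (hu : 0 < u) :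
    Tendsto (fun ε : ℝ => ε / ((1 + ε) * Real.exp (ε * u) - 1))
      (nhdsWithin 0 (Set.Ioi 0)) (nhds (1 / (1 + u))) := by
  have hslope : Tendsto (fun ε : ℝ => (Real.exp (ε * u) - 1) / ε)
      (nhdsWithin 0 (Set.Ioi 0)) (nhds u) := by
    have hd : HasDerivAt (fun ε : ℝ => Real.exp (ε * u)) u 0 := by
      have h1 : HasDerivAt (fun ε : ℝ => ε * u) u 0 := hasDerivAt_mul_const u
      simpa using h1.exp
    have h2 := hasDerivAt_iff_tendsto_slope.mp hd
    have h3 : Tendsto (slope (fun ε : ℝ => Real.exp (ε * u)) 0)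
        (nhdsWithin 0 (Set.Ioi 0)) (nhds u) :=
      h2.mono_left (nhdsWithin_mono _ (fun x hx => ne_of_gt hx))
    refine h3.congr' ?_
    filter_upwards [self_mem_nhdsWithin] with ε hε
    rw [slope_def_field]
    simp
  have h4 : Tendsto (fun ε : ℝ => (1 + ε) * ((Real.exp (ε * u) - 1) / ε) + 1)
      (nhdsWithin 0 (Set.Ioi 0)) (nhds (1 * u + 1)) := by
    refine Tendsto.add ?_ tendsto_const_nhds
    refine Tendsto.mul ?_ hslope
    have : Tendsto (fun ε : ℝ => 1 + ε) (nhds 0) (nhds (1 + 0)) :=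
      (continuous_const.add continuous_id).tendsto 0
    simpa using this.mono_left nhdsWithin_le_nhds
  have h5 := h4.inv₀ (by positivity)
  have h6 : (1 * u + 1)⁻¹ = 1 / (1 + u) := by rw [one_div]; ring_nf
  rw [h6] at h5
  refine h5.congr' ?_
  filter_upwards [self_mem_nhdsWithin] with ε hε
  have hε' : (0:ℝ) < ε := hε
  have : (1 + ε) * ((Real.exp (ε * u) - 1) / ε) + 1
      = ((1 + ε) * Real.exp (ε * u) - 1) / ε := by
    field_simp
    ring
  rw [this, inv_div]

private lemma F_meas {a : ℝ} {ε : ℝ} (hε : 0 < ε) :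
    AEStronglyMeasurable
      (fun u : ℝ => u ^ (-a) * (ε / ((1 + ε) * Real.exp (ε * u) - 1)))
      (volume.restrict (Set.Ioi 0)) := by
  refine ContinuousOn.aestronglyMeasurable ?_ measurableSet_Ioi
  refine ContinuousOn.mul ?_ ?_
  · exact ContinuousOn.rpow_const continuousOn_id (fun x hx => Or.inl (ne_of_gt hx))
  · refine ContinuousOn.div continuousOn_const (by fun_prop) ?_
    intro x hx
    exact (denom_pos hε (le_of_lt hx)).ne'

private lemma F_le {a : ℝ} {ε : ℝ} (hε : 0 < ε) :
    ∀ᵐ u ∂(volume.restrict (Set.Ioi (0:ℝ))),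
      ‖u ^ (-a) * (ε / ((1 + ε) * Real.exp (ε * u) - 1))‖ ≤ u ^ (-a) / (1 + u) := by
  filter_upwards [ae_restrict_mem measurableSet_Ioi] with u hu
  have hu' : (0:ℝ) < u := hu
  have h0 : 0 ≤ u ^ (-a) := Real.rpow_nonneg hu'.le _
  have hg0 : 0 ≤ ε / ((1 + ε) * Real.exp (ε * u) - 1) :=
    div_nonneg hε.le (denom_pos hε hu'.le).le
  rw [Real.norm_eq_abs, abs_of_nonneg (by positivity), div_eq_mul_inv (u ^ (-a)), ← one_div]
  exact mul_le_mul_of_nonneg_left (g_le hε hu'.le) h0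

end PolylogAux

/-- Polylogarithm estimate: for `0 ≤ s < 1/2`, the quantity
`ε^{s+1/2} Σ_{m≥1} m^{s-1/2} (1+ε)^{-m}` is bounded by `Γ(s+1/2)` for all `ε > 0`
and converges to `Γ(s+1/2)` as `ε → 0⁺`. -/
theorem polylog_gamma_estimate (s : ℝ) (hs0 : 0 ≤ s) (hs1 : s < 1 / 2) :
    (∀ ε : ℝ, 0 < ε →
      ε ^ (s + 1 / 2) * ∑' m : ℕ, ((m : ℝ) + 1) ^ (s - 1 / 2) * (1 + ε) ^ (-((m : ℝ) + 1))
        ≤ Real.Gamma (s + 1 / 2)) ∧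
    Tendsto
      (fun ε : ℝ =>
        ε ^ (s + 1 / 2) * ∑' m : ℕ, ((m : ℝ) + 1) ^ (s - 1 / 2) * (1 + ε) ^ (-((m : ℝ) + 1)))
      (nhdsWithin 0 (Set.Ioi 0)) (nhds (Real.Gamma (s + 1 / 2))) := by
  set a : ℝ := s + 1 / 2 with ha
  have ha0 : 0 < a := by rw [ha]; linarith
  have ha1 : a < 1 := by rw [ha]; linarith
  have hb : 0 < 1 - a := by linarith
  have hΓb : 0 < Real.Gamma (1 - a) := Real.Gamma_pos_of_pos hb
  have hexp : s - 1 / 2 = a - 1 := by rw [ha]; ring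
  rw [hexp]
  have hFint : ∀ ε : ℝ, 0 < ε → MeasureTheory.IntegrableOn
      (fun u : ℝ => u ^ (-a) * (ε / ((1 + ε) * Real.exp (ε * u) - 1))) (Set.Ioi 0) :=
    fun ε hε => (beta_integrable ha0 ha1).mono' (F_meas hε) (F_le hε)
  constructor
  · intro ε hε
    have hM := master ha0 ha1 hε
    have hle : (∫ u in Set.Ioi (0:ℝ), u ^ (-a) * (ε / ((1 + ε) * Real.exp (ε * u) - 1)))
        ≤ ∫ u in Set.Ioi (0:ℝ), u ^ (-a) / (1 + u) := by
      refine MeasureTheory.setIntegral_mono_on (hFint ε hε) (beta_integrable ha0 ha1)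
        measurableSet_Ioi fun u hu => ?_
      have hu' : (0:ℝ) < u := hu
      have h0 : 0 ≤ u ^ (-a) := Real.rpow_nonneg hu'.le _
      rw [div_eq_mul_inv (u ^ (-a)), ← one_div]
      exact mul_le_mul_of_nonneg_left (g_le hε hu'.le) h0
    rw [beta_value ha0 ha1] at hle
    rw [← hM] at hle
    exact le_of_mul_le_mul_left hle hΓb
  · have hint : Tendsto (fun ε : ℝ =>
        ∫ u in Set.Ioi (0:ℝ), u ^ (-a) * (ε / ((1 + ε) * Real.exp (ε * u) - 1)))
        (nhdsWithin 0 (Set.Ioi 0))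
        (nhds (∫ u in Set.Ioi (0:ℝ), u ^ (-a) / (1 + u))) := by
      refine MeasureTheory.tendsto_integral_filter_of_dominated_convergence
        (fun u => u ^ (-a) / (1 + u)) ?_ ?_ (beta_integrable ha0 ha1) ?_
      · filter_upwards [self_mem_nhdsWithin] with ε hε
        exact F_meas hε
      · filter_upwards [self_mem_nhdsWithin] with ε hε
        exact F_le hε
      · filter_upwards [MeasureTheory.ae_restrict_mem measurableSet_Ioi] with u hu
        have hu' : (0:ℝ) < u := hu
        have := (tendsto_const_nhds (x := u ^ (-a))
          (f := nhdsWithin (0:ℝ) (Set.Ioi 0))).mul (g_tendsto hu')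
        rw [mul_one_div] at this
        exact this
    rw [beta_value ha0 ha1] at hint
    have h2 : Tendsto (fun ε : ℝ => (Real.Gamma (1 - a))⁻¹ *
        ∫ u in Set.Ioi (0:ℝ), u ^ (-a) * (ε / ((1 + ε) * Real.exp (ε * u) - 1)))
        (nhdsWithin 0 (Set.Ioi 0)) (nhds (Real.Gamma a)) := by
      have := (tendsto_const_nhds (x := (Real.Gamma (1 - a))⁻¹)
        (f := nhdsWithin (0:ℝ) (Set.Ioi 0))).mul hint
      rwa [← mul_assoc, inv_mul_cancel₀ hΓb.ne', one_mul] at this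
    refine h2.congr' ?_
    filter_upwards [self_mem_nhdsWithin] with ε hε
    have hM := master ha0 ha1 (hε : (0:ℝ) < ε)
    rw [← hM, ← mul_assoc, inv_mul_cancel₀ hΓb.ne', one_mul]
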